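/- Under the principal alignment setup (M = UΣV^T, X_p^T U_p = cos Θ, Δ_p sin Θ = (I − X_p X_p^T)U_p, Ξ = Q^T Σ^2 Q), the Riemannian gradient of f(X) = (1/2)‖(I − X X^T)M‖_F^2 at X_p, defined as −(I − X_p X_p^T) M M^T X_p, equals −Δ_p sin(Θ) Ξ cos(Θ). -/
import Mathlib


open Matrix Real

/-- under the principal alignment setup, the Riemannian gradient
`grad f(Xp) = −(I − Xp Xpᵀ) M Mᵀ Xp` has the compact form `−Δp sin(Θ) Ξ cos(Θ)`. -/
theorem gradient_compact_form {m n r : ℕ}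
    (U : Matrix (Fin m) (Fin r) ℝ) (V : Matrix (Fin n) (Fin r) ℝ) (σ : Fin r → ℝ)
    (hU : Uᵀ * U = 1) (hV : Vᵀ * V = 1)
    (M : Matrix (Fin m) (Fin n) ℝ) (hM : M = U * Matrix.diagonal σ * Vᵀ)
    (Q : Matrix (Fin r) (Fin r) ℝ) (hQ : Qᵀ * Q = 1)
    (Xp Δp : Matrix (Fin m) (Fin r) ℝ) (hXp : Xpᵀ * Xp = 1)
    (θ : Fin r → ℝ)
    (hcos : Xpᵀ * (U * Q) = Matrix.diagonal (fun i => Real.cos (θ i)))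
    (hΔp : Δpᵀ * Δp = 1) (hXΔp : Xpᵀ * Δp = 0)
    (hΔsin : Δp * Matrix.diagonal (fun i => Real.sin (θ i)) =
      ((1 : Matrix (Fin m) (Fin m) ℝ) - Xp * Xpᵀ) * (U * Q))
    (Ξ : Matrix (Fin r) (Fin r) ℝ)
    (hΞ : Ξ = Qᵀ * (Matrix.diagonal σ * Matrix.diagonal σ) * Q) :
    -(((1 : Matrix (Fin m) (Fin m) ℝ) - Xp * Xpᵀ) * M * Mᵀ * Xp) =
      -(Δp * Matrix.diagonal (fun i => Real.sin (θ i)) * Ξ *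
        Matrix.diagonal (fun i => Real.cos (θ i))) := by
  have hQQT : Q * Qᵀ = 1 := by
    rw [mul_eq_one_comm] at hQ; exact hQ
  have hUX : Qᵀ * (Uᵀ * Xp) = Matrix.diagonal (fun i => Real.cos (θ i)) := by
    have := congrArg Matrix.transpose hcos
    simpa [Matrix.transpose_mul, Matrix.diagonal_transpose, Matrix.mul_assoc] using this
  have hMM : M * Mᵀ = U * (Matrix.diagonal σ * Matrix.diagonal σ) * Uᵀ := by
    subst hM
    simp only [Matrix.transpose_mul, Matrix.transpose_transpose, Matrix.diagonal_transpose]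
    calc U * Matrix.diagonal σ * Vᵀ * (V * (Matrix.diagonal σ * Uᵀ))
        = U * Matrix.diagonal σ * (Vᵀ * V) * (Matrix.diagonal σ * Uᵀ) := by
          simp [Matrix.mul_assoc]
      _ = U * (Matrix.diagonal σ * Matrix.diagonal σ) * Uᵀ := by
          rw [hV]; simp only [Matrix.mul_one, Matrix.mul_assoc]
  congr 1
  calc ((1 : Matrix (Fin m) (Fin m) ℝ) - Xp * Xpᵀ) * M * Mᵀ * Xp
      = ((1 : Matrix (Fin m) (Fin m) ℝ) - Xp * Xpᵀ) * (M * Mᵀ * Xp) := by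
        simp [Matrix.mul_assoc]
    _ = ((1 : Matrix (Fin m) (Fin m) ℝ) - Xp * Xpᵀ) *
        (U * ((Q * Qᵀ) * ((Matrix.diagonal σ * Matrix.diagonal σ) *
          ((Q * Qᵀ) * (Uᵀ * Xp))))) := by
        rw [hMM, hQQT]; simp [Matrix.mul_assoc]
    _ = (((1 : Matrix (Fin m) (Fin m) ℝ) - Xp * Xpᵀ) * (U * Q)) *
        (Qᵀ * (Matrix.diagonal σ * Matrix.diagonal σ) * Q) * (Qᵀ * (Uᵀ * Xp)) := by
        simp [Matrix.mul_assoc]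
    _ = Δp * Matrix.diagonal (fun i => Real.sin (θ i)) * Ξ *
        Matrix.diagonal (fun i => Real.cos (θ i)) := by
        rw [← hΔsin, hΞ, hUX]
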